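/- There exists an antipodal point set S of 10 points on the unit sphere S² ⊂ ℝ³ and two antipodal polytopes P₁, P₂ on S such that the origin is not in the interior of P₁, the origin is in the interior of P₂, and Vol(P₁) > Vol(P₂). Concretely, for sufficiently small ε > 0, with δ = √(1−2ε²), take v₁=(0,0,1), v₂=(δ,ε,ε), v₃=(−δ,ε,ε), v₄=(ε,δ,ε), v₅=(ε,−δ,ε); then P₁ = conv{v₁,…,v₅} does not contain the origin and has volume converging to 2/3 as ε → 0, while P₂ = conv{−v₁,−v₂,v₃,v₄,v₅} contains the origin in its interior and has volume converging to 1/3. -/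

import Mathlib

open MeasureTheory Filter
open scoped ENNReal

/-- Apex of the pyramid. -/
noncomputable def w1 : Fin 3 → ℝ := ![0, 0, 1]
noncomputable def w2 (e : ℝ) : Fin 3 → ℝ := ![Real.sqrt (1 - 2 * e ^ 2), e, e]
noncomputable def w3 (e : ℝ) : Fin 3 → ℝ := ![-Real.sqrt (1 - 2 * e ^ 2), e, e]
noncomputable def w4 (e : ℝ) : Fin 3 → ℝ := ![e, Real.sqrt (1 - 2 * e ^ 2), e]
noncomputable def w5 (e : ℝ) : Fin 3 → ℝ := ![e, -Real.sqrt (1 - 2 * e ^ 2), e]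

/-- The "thin" antipodal polytope (a pyramid not containing the origin). -/
noncomputable def P1 (e : ℝ) : Set (Fin 3 → ℝ) :=
  convexHull ℝ {w1, w2 e, w3 e, w4 e, w5 e}

/-- The antipodal polytope obtained by flipping v₁ and v₂; it contains the
origin in its interior. -/
noncomputable def P2 (e : ℝ) : Set (Fin 3 → ℝ) :=
  convexHull ℝ {-w1, -(w2 e), w3 e, w4 e, w5 e}

open Matrix
open scoped Pointwise
set_option maxHeartbeats 1000000

noncomputable section

/-- 1D: volume of a segment in `Fin 1 → ℝ`. -/
lemma vol1_seg (a : ℝ) :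
    volume {z : Fin 1 → ℝ | 0 ≤ z 0 ∧ z 0 ≤ a} = ENNReal.ofReal a := by
  have h := (volume_preserving_funUnique (Fin 1) ℝ).measure_preimage
    (measurableSet_Icc (a := (0:ℝ)) (b := a)).nullMeasurableSet
  have hs : {z : Fin 1 → ℝ | 0 ≤ z 0 ∧ z 0 ≤ a}
      = (MeasurableEquiv.funUnique (Fin 1) ℝ) ⁻¹' (Set.Icc 0 a) := by
    ext z
    simp [MeasurableEquiv.funUnique, Set.mem_Icc]
  rw [hs]
  exact h.trans (by rw [Real.volume_Icc, sub_zero])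

/-- 2D: volume of the triangle `{y ≥ 0, y₀ + y₁ ≤ s}` in `Fin 2 → ℝ`. -/
lemma vol2_tri (s : ℝ) (hs : 0 ≤ s) :
    volume {y : Fin 2 → ℝ | (∀ i, 0 ≤ y i) ∧ y 0 + y 1 ≤ s}
      = ENNReal.ofReal (s ^ 2 / 2) := by
  set B : Set (ℝ × (Fin 1 → ℝ)) :=
    {p | 0 ≤ p.1 ∧ 0 ≤ p.2 0 ∧ p.1 + p.2 0 ≤ s} with hB
  have hBm : MeasurableSet B := by
    apply MeasurableSet.inter
    · exact measurableSet_le measurable_const measurable_fst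
    apply MeasurableSet.inter
    · exact measurableSet_le measurable_const
        ((measurable_pi_apply (X := fun _ : Fin 1 => ℝ) 0).comp (measurable_snd (α := ℝ)))
    · exact measurableSet_le
        (measurable_fst.add ((measurable_pi_apply (X := fun _ : Fin 1 => ℝ) 0).comp (measurable_snd (α := ℝ))))
        measurable_const
  have hpre : {y : Fin 2 → ℝ | (∀ i, 0 ≤ y i) ∧ y 0 + y 1 ≤ s}
      = (MeasurableEquiv.piFinSuccAbove (fun _ : Fin 2 => ℝ) 0) ⁻¹' B := by
    ext y
    simp only [Set.mem_setOf_eq, Set.mem_preimage, MeasurableEquiv.piFinSuccAbove,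
      MeasurableEquiv.coe_mk, hB]
    constructor
    · rintro ⟨h1, h2⟩
      exact ⟨h1 0, by simpa [Fin.zero_succAbove, Fin.tail] using h1 1, by simpa [Fin.zero_succAbove, Fin.tail] using h2⟩
    · rintro ⟨h1, h2, h3⟩
      refine ⟨?_, by simpa [Fin.zero_succAbove, Fin.tail] using h3⟩
      intro i
      fin_cases i
      · exact h1
      · simpa [Fin.zero_succAbove, Fin.tail] using h2
  rw [hpre, (volume_preserving_piFinSuccAbove (fun _ : Fin 2 => ℝ) 0).measure_preimage
    hBm.nullMeasurableSet]
  have hvol : (volume : Measure (ℝ × (Fin 1 → ℝ))) = (volume : Measure ℝ).prod volume := rfl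
  rw [hvol, Measure.prod_apply hBm]
  have hslice : ∀ t : ℝ, volume (Prod.mk t ⁻¹' B)
      = (Set.Icc 0 s).indicator (fun t => ENNReal.ofReal (s - t)) t := by
    intro t
    rcases le_or_gt 0 t with ht | ht
    · rcases le_or_gt t s with ht' | ht'
      · have : Prod.mk t ⁻¹' B = {z : Fin 1 → ℝ | 0 ≤ z 0 ∧ z 0 ≤ s - t} := by
          ext z; simp only [Set.mem_preimage, hB, Set.mem_setOf_eq]
          constructor
          · rintro ⟨_, h2, h3⟩; exact ⟨h2, by linarith⟩
          · rintro ⟨h2, h3⟩; exact ⟨ht, h2, by linarith⟩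
        rw [this, vol1_seg, Set.indicator_of_mem (Set.mem_Icc.2 ⟨ht, ht'⟩)]
      · have : Prod.mk t ⁻¹' B = ∅ := by
          ext z; simp only [Set.mem_preimage, hB, Set.mem_setOf_eq, Set.mem_empty_iff_false,
            iff_false]
          rintro ⟨_, h2, h3⟩; linarith
        rw [this, measure_empty, Set.indicator_of_notMem
          (by simp only [Set.mem_Icc, not_and, not_le]; intro _; linarith)]
    · have : Prod.mk t ⁻¹' B = ∅ := by
        ext z; simp only [Set.mem_preimage, hB, Set.mem_setOf_eq, Set.mem_empty_iff_false,
          iff_false]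
        rintro ⟨h1, _, _⟩; linarith
      rw [this, measure_empty, Set.indicator_of_notMem
        (by simp only [Set.mem_Icc, not_and, not_le]; intro _; linarith)]
  rw [lintegral_congr hslice, lintegral_indicator measurableSet_Icc]
  have hint : IntegrableOn (fun t => s - t) (Set.Icc 0 s) volume :=
    (continuous_const.sub continuous_id).integrableOn_Icc
  rw [← ofReal_integral_eq_lintegral_ofReal hint]
  · congr 1
    rw [MeasureTheory.integral_Icc_eq_integral_Ioc, ← intervalIntegral.integral_of_le hs]
    have : ∫ t in (0:ℝ)..s, (s - t) = (s - 0) • s - (s^2 - 0^2)/2 := by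
      rw [intervalIntegral.integral_sub (intervalIntegrable_const)
        intervalIntegral.intervalIntegrable_id, intervalIntegral.integral_const,
        integral_id]
    rw [this]; simp only [smul_eq_mul]; ring
  · filter_upwards [ae_restrict_mem measurableSet_Icc] with t ht
    simp only [Set.mem_Icc] at ht
    simp only [Pi.zero_apply]
    linarith [ht.2]

def corner : Set (Fin 3 → ℝ) := {x | (∀ i, 0 ≤ x i) ∧ x 0 + x 1 + x 2 ≤ 1}

lemma volume_corner : volume corner = ENNReal.ofReal (1 / 6) := by
  set B : Set (ℝ × (Fin 2 → ℝ)) :=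
    {p | 0 ≤ p.1 ∧ ((∀ i, 0 ≤ p.2 i) ∧ p.2 0 + p.2 1 ≤ 1 - p.1)} with hB
  have hBm : MeasurableSet B := by
    apply MeasurableSet.inter
    · exact measurableSet_le measurable_const measurable_fst
    apply MeasurableSet.inter
    · show MeasurableSet {p : ℝ × (Fin 2 → ℝ) | ∀ i, 0 ≤ p.2 i}
      rw [Set.setOf_forall]
      exact MeasurableSet.iInter fun i => measurableSet_le measurable_const
        ((measurable_pi_apply (X := fun _ : Fin 2 => ℝ) i).comp (measurable_snd (α := ℝ)))
    · exact measurableSet_le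
        (((measurable_pi_apply (X := fun _ : Fin 2 => ℝ) 0).comp (measurable_snd (α := ℝ))).add
          ((measurable_pi_apply (X := fun _ : Fin 2 => ℝ) 1).comp (measurable_snd (α := ℝ))))
        (measurable_const.sub measurable_fst)
  have key : ∀ x : Fin 3 → ℝ, (MeasurableEquiv.piFinSuccAbove (fun _ : Fin 3 => ℝ) 0) x
      = (x 0, fun j => x ((0 : Fin 3).succAbove j)) := fun _ => rfl
  have s0 : (0 : Fin 3).succAbove 0 = 1 := by decide
  have s1 : (0 : Fin 3).succAbove 1 = 2 := by decide
  have hpre : corner = (MeasurableEquiv.piFinSuccAbove (fun _ : Fin 3 => ℝ) 0) ⁻¹' B := by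
    ext x
    simp only [corner, Set.mem_setOf_eq, Set.mem_preimage, key, hB, s0, s1]
    constructor
    · rintro ⟨h1, h2⟩
      exact ⟨h1 0, fun i => h1 _, by linarith⟩
    · rintro ⟨h1, h2, h3⟩
      refine ⟨fun i => ?_, by linarith⟩
      fin_cases i
      · exact h1
      · have := h2 0; rwa [s0] at this
      · have := h2 1; rwa [s1] at this
  rw [hpre, (volume_preserving_piFinSuccAbove (fun _ : Fin 3 => ℝ) 0).measure_preimage
    hBm.nullMeasurableSet]
  have hvol : (volume : Measure (ℝ × (Fin 2 → ℝ))) = (volume : Measure ℝ).prod volume := rfl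
  rw [hvol, Measure.prod_apply hBm]
  have hslice : ∀ t : ℝ, volume (Prod.mk t ⁻¹' B)
      = (Set.Icc 0 1).indicator (fun t => ENNReal.ofReal ((1 - t) ^ 2 / 2)) t := by
    intro t
    rcases le_or_gt 0 t with ht | ht
    · rcases le_or_gt t 1 with ht' | ht'
      · have : Prod.mk t ⁻¹' B = {y : Fin 2 → ℝ | (∀ i, 0 ≤ y i) ∧ y 0 + y 1 ≤ 1 - t} := by
          ext y; simp only [Set.mem_preimage, hB, Set.mem_setOf_eq]
          exact ⟨fun h => h.2, fun h => ⟨ht, h⟩⟩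
        rw [this, vol2_tri _ (by linarith), Set.indicator_of_mem (Set.mem_Icc.2 ⟨ht, ht'⟩)]
      · have : Prod.mk t ⁻¹' B = ∅ := by
          ext y; simp only [Set.mem_preimage, hB, Set.mem_setOf_eq, Set.mem_empty_iff_false,
            iff_false]
          rintro ⟨_, h2, h3⟩
          have := h2 0; have := h2 1; linarith
        rw [this, measure_empty, Set.indicator_of_notMem
          (by simp only [Set.mem_Icc, not_and, not_le]; intro _; linarith)]
    · have : Prod.mk t ⁻¹' B = ∅ := by
        ext y; simp only [Set.mem_preimage, hB, Set.mem_setOf_eq, Set.mem_empty_iff_false,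
          iff_false]
        rintro ⟨h1, _⟩; linarith
      rw [this, measure_empty, Set.indicator_of_notMem
        (by simp only [Set.mem_Icc, not_and, not_le]; intro _; linarith)]
  rw [lintegral_congr hslice, lintegral_indicator measurableSet_Icc]
  have hint : IntegrableOn (fun t : ℝ => (1 - t) ^ 2 / 2) (Set.Icc 0 1) volume := by
    apply Continuous.integrableOn_Icc
    continuity
  rw [← ofReal_integral_eq_lintegral_ofReal hint]
  · congr 1
    rw [MeasureTheory.integral_Icc_eq_integral_Ioc,
      ← intervalIntegral.integral_of_le (by norm_num : (0:ℝ) ≤ 1)]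
    have hsub : ∫ t in (0:ℝ)..1, (1 - t) ^ 2 / 2 = ∫ t in (1-(1:ℝ))..(1-(0:ℝ)), t ^ 2 / 2 :=
      intervalIntegral.integral_comp_sub_left (a := 0) (b := 1) (fun u => u ^ 2 / 2) 1
    rw [hsub]
    norm_num
  · filter_upwards [ae_restrict_mem measurableSet_Icc] with t ht
    simp only [Pi.zero_apply]
    positivity

lemma convex_corner : Convex ℝ corner := by
  rintro x ⟨hx1, hx2⟩ y ⟨hy1, hy2⟩ a b ha hb hab
  constructor
  · intro i
    have := hx1 i; have := hy1 i
    simp only [Pi.add_apply, Pi.smul_apply, smul_eq_mul]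
    nlinarith
  · simp only [Pi.add_apply, Pi.smul_apply, smul_eq_mul]
    nlinarith

/-- Generic lemma: a point written as a convex combination (with possibly
unnormalised positive total weight) of four points lies in their hull. -/
lemma mem_hull4 {p₁ p₂ p₃ p₄ x : Fin 3 → ℝ} {c₁ c₂ c₃ c₄ : ℝ}
    (h₁ : 0 ≤ c₁) (h₂ : 0 ≤ c₂) (h₃ : 0 ≤ c₃) (h₄ : 0 ≤ c₄)
    (hs : 0 < c₁ + c₂ + c₃ + c₄)
    (hx : c₁ • p₁ + c₂ • p₂ + c₃ • p₃ + c₄ • p₄ = (c₁ + c₂ + c₃ + c₄) • x) :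
    x ∈ convexHull ℝ {p₁, p₂, p₃, p₄} := by
  have key := Finset.centerMass_mem_convexHull (Finset.univ : Finset (Fin 4))
    (w := ![c₁, c₂, c₃, c₄]) (z := ![p₁, p₂, p₃, p₄])
    (s := {p₁, p₂, p₃, p₄})
    (fun i _ => by fin_cases i <;> simpa)
    (by rw [Fin.sum_univ_four]; simpa using hs)
    (fun i _ => by fin_cases i <;> simp)
  have hcm : (Finset.univ : Finset (Fin 4)).centerMass ![c₁, c₂, c₃, c₄] ![p₁, p₂, p₃, p₄] = x := by
    rw [Finset.centerMass, Fin.sum_univ_four, Fin.sum_univ_four]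
    simp only [Matrix.cons_val_zero, Matrix.cons_val_one, Matrix.head_cons,
      Matrix.cons_val_two, Matrix.tail_cons, Matrix.cons_val_three, Matrix.head_fin_const]
    rw [inv_smul_eq_iff₀ (by positivity)]
    rw [hx]
  rwa [hcm] at key

lemma corner_eq_hull :
    convexHull ℝ {(0 : Fin 3 → ℝ), Pi.single 0 1, Pi.single 1 1, Pi.single 2 1} = corner := by
  apply le_antisymm
  · apply convexHull_min _ convex_corner
    rintro x hx
    simp only [Set.mem_insert_iff, Set.mem_singleton_iff] at hx
    rcases hx with rfl | rfl | rfl | rfl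
    · exact ⟨fun i => le_rfl, by norm_num⟩
    · exact ⟨fun i => by simp [Pi.single_apply]; split <;> norm_num, by simp [Pi.single_apply]⟩
    · exact ⟨fun i => by simp [Pi.single_apply]; split <;> norm_num, by simp [Pi.single_apply]⟩
    · exact ⟨fun i => by simp [Pi.single_apply]; split <;> norm_num, by simp [Pi.single_apply]⟩
  · intro x hx
    obtain ⟨hx1, hx2⟩ := hx
    apply mem_hull4 (c₁ := 1 - (x 0 + x 1 + x 2)) (c₂ := x 0) (c₃ := x 1) (c₄ := x 2)
      (by linarith) (hx1 0) (hx1 1) (hx1 2) (by linarith)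
    funext i
    simp only [Pi.add_apply, Pi.smul_apply, smul_eq_mul, Pi.zero_apply]
    fin_cases i <;> simp [Pi.single_apply] <;> ring

/-- The affine map `x ↦ p + (matrix with rows v₁ v₂ v₃)ᵀ * x`. -/
def tmap (p v₁ v₂ v₃ : Fin 3 → ℝ) : (Fin 3 → ℝ) →ᵃ[ℝ] (Fin 3 → ℝ) :=
  (Matrix.toLin' (Matrix.of ![v₁, v₂, v₃])ᵀ).toAffineMap + AffineMap.const ℝ _ p

lemma tmap_apply (p v₁ v₂ v₃ x : Fin 3 → ℝ) :
    tmap p v₁ v₂ v₃ x = (Matrix.of ![v₁, v₂, v₃])ᵀ.mulVec x + p := by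
  simp [tmap, Matrix.toLin'_apply]

lemma tmap_image_corner (p v₁ v₂ v₃ : Fin 3 → ℝ) :
    (tmap p v₁ v₂ v₃) '' corner = convexHull ℝ {p, p + v₁, p + v₂, p + v₃} := by
  rw [← corner_eq_hull, AffineMap.image_convexHull]
  congr 1
  rw [Set.image_insert_eq, Set.image_insert_eq, Set.image_insert_eq, Set.image_singleton]
  congr 1
  · rw [tmap_apply]
    simp [Matrix.mulVec_zero]
  congr 1
  · rw [tmap_apply, Matrix.mulVec_single]
    funext i
    simp [Matrix.transpose_apply, add_comm]
  congr 1
  · rw [tmap_apply, Matrix.mulVec_single]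
    funext i
    simp [Matrix.transpose_apply, add_comm]
  · rw [tmap_apply, Matrix.mulVec_single]
    funext i
    simp [Matrix.transpose_apply, add_comm]

lemma volume_tetra (p v₁ v₂ v₃ : Fin 3 → ℝ) :
    volume (convexHull ℝ {p, p + v₁, p + v₂, p + v₃})
      = ENNReal.ofReal (|(Matrix.of ![v₁, v₂, v₃]).det| / 6) := by
  rw [← tmap_image_corner]
  have himg : (tmap p v₁ v₂ v₃) '' corner
      = (fun y => p + y) '' ((Matrix.toLin' (Matrix.of ![v₁, v₂, v₃])ᵀ) '' corner) := by
    rw [Set.image_image]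
    apply Set.image_congr
    intro x _
    rw [tmap_apply, Matrix.toLin'_apply, add_comm]
  rw [himg]
  have htrans : volume ((fun y => p + y) ''
      ((Matrix.toLin' (Matrix.of ![v₁, v₂, v₃])ᵀ) '' corner))
      = volume ((Matrix.toLin' (Matrix.of ![v₁, v₂, v₃])ᵀ) '' corner) := by
    rw [show (fun y => p + y) '' ((Matrix.toLin' (Matrix.of ![v₁, v₂, v₃])ᵀ) '' corner)
        = p +ᵥ ((Matrix.toLin' (Matrix.of ![v₁, v₂, v₃])ᵀ) '' corner) from rfl]
    exact measure_vadd _ _ _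
  rw [htrans, Measure.addHaar_image_linearMap, volume_corner, LinearMap.det_toLin', Matrix.det_transpose,
    ← ENNReal.ofReal_mul (abs_nonneg _)]
  congr 1
  ring

lemma exists_rep5 {q₁ q₂ q₃ q₄ q₅ x : Fin 3 → ℝ}
    (hx : x ∈ convexHull ℝ {q₁, q₂, q₃, q₄, q₅}) :
    ∃ a b c d f : ℝ, 0 ≤ a ∧ 0 ≤ b ∧ 0 ≤ c ∧ 0 ≤ d ∧ 0 ≤ f ∧
      a + b + c + d + f = 1 ∧ a • q₁ + b • q₂ + c • q₃ + d • q₄ + f • q₅ = x := by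
  rw [convexHull_insert (by simp), mem_convexJoin] at hx
  obtain ⟨p, hp, z, hz, hseg⟩ := hx
  rw [Set.mem_singleton_iff] at hp
  subst hp
  rw [convexHull_insert (by simp), mem_convexJoin] at hz
  obtain ⟨p2, hp2, z2, hz2, hseg2⟩ := hz
  rw [Set.mem_singleton_iff] at hp2
  subst hp2
  rw [convexHull_insert (by simp), mem_convexJoin] at hz2
  obtain ⟨p3, hp3, z3, hz3, hseg3⟩ := hz2
  rw [Set.mem_singleton_iff] at hp3
  subst hp3
  rw [convexHull_pair] at hz3
  obtain ⟨a₁, b₁, ha₁, hb₁, hab₁, h₁⟩ := hseg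
  obtain ⟨a₂, b₂, ha₂, hb₂, hab₂, h₂⟩ := hseg2
  obtain ⟨a₃, b₃, ha₃, hb₃, hab₃, h₃⟩ := hseg3
  obtain ⟨a₄, b₄, ha₄, hb₄, hab₄, h₄⟩ := hz3
  refine ⟨a₁, b₁ * a₂, b₁ * b₂ * a₃, b₁ * b₂ * b₃ * a₄, b₁ * b₂ * b₃ * b₄,
    ha₁, by positivity, by positivity, by positivity, by positivity, by linear_combination hab₁ + b₁ * hab₂ + b₁ * b₂ * hab₃ + b₁ * b₂ * b₃ * hab₄, ?_⟩
  subst h₁ h₂ h₃ h₄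
  module

section facts
variable {e : ℝ} (he : 0 < e) (he1 : e < 1/10)

lemma hd2 (he : 0 < e) (he1 : e < 1/10) : Real.sqrt (1 - 2 * e ^ 2) ^ 2 = 1 - 2 * e ^ 2 :=
  Real.sq_sqrt (by nlinarith)

lemma hd1 (he : 0 < e) (he1 : e < 1/10) : Real.sqrt (1 - 2 * e ^ 2) ≤ 1 :=
  Real.sqrt_le_one.2 (by nlinarith)

lemma hde (he : 0 < e) (he1 : e < 1/10) : e < Real.sqrt (1 - 2 * e ^ 2) := by
  have : e ^ 2 < 1 - 2 * e ^ 2 := by nlinarith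
  nlinarith [Real.sq_sqrt (by nlinarith : (0:ℝ) ≤ 1 - 2 * e ^ 2),
    Real.sqrt_nonneg (1 - 2 * e ^ 2)]

end facts

/-- The exchange identity for `P1`. -/
lemma identity1 (e : ℝ) :
    (Real.sqrt (1 - 2 * e ^ 2) + e) • w2 e + (Real.sqrt (1 - 2 * e ^ 2) - e) • w3 e
      = (Real.sqrt (1 - 2 * e ^ 2) + e) • w4 e + (Real.sqrt (1 - 2 * e ^ 2) - e) • w5 e := by
  funext i
  fin_cases i <;>
    simp [w2, w3, w4, w5] <;> ring

lemma P1_eq {e : ℝ} (he : 0 < e) (he1 : e < 1/10) :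
    P1 e = convexHull ℝ {w1, w2 e, w4 e, w5 e} ∪ convexHull ℝ {w1, w3 e, w4 e, w5 e} := by
  set δ := Real.sqrt (1 - 2 * e ^ 2) with hδ
  have hd := hde he he1
  apply le_antisymm
  · intro x hx
    obtain ⟨a, b, c, d, f, ha, hb, hc, hd', hf, hsum, hrep⟩ := exists_rep5 hx
    have hI := identity1 e
    rw [← hδ] at hI
    rcases le_or_gt (c * (δ + e)) (b * (δ - e)) with hcase | hcase
    · left
      apply mem_hull4 (c₁ := a * (δ - e)) (c₂ := b * (δ - e) - c * (δ + e))
        (c₃ := d * (δ - e) + c * (δ + e)) (c₄ := (f + c) * (δ - e))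
        (by nlinarith) (by nlinarith) (by nlinarith) (by nlinarith) (by nlinarith)
      funext i
      have h1 := congrFun hrep i
      have h2 := congrFun hI i
      simp only [Pi.add_apply, Pi.smul_apply, smul_eq_mul] at h1 h2 ⊢
      linear_combination (δ - e) * h1 - c * h2 - ((δ - e) * x i) * hsum
    · right
      apply mem_hull4 (c₁ := a * (δ + e)) (c₂ := c * (δ + e) - b * (δ - e))
        (c₃ := (d + b) * (δ + e)) (c₄ := f * (δ + e) + b * (δ - e))
        (by nlinarith) (by nlinarith) (by nlinarith) (by nlinarith) (by nlinarith)
      funext i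
      have h1 := congrFun hrep i
      have h2 := congrFun hI i
      simp only [Pi.add_apply, Pi.smul_apply, smul_eq_mul] at h1 h2 ⊢
      linear_combination (δ + e) * h1 - b * h2 - ((δ + e) * x i) * hsum
  · apply Set.union_subset <;>
      exact convexHull_mono (by intro y hy; simp only [Set.mem_insert_iff,
        Set.mem_singleton_iff] at hy ⊢; tauto)

/-- The exchange identity for `P2`:
`λ₂ • (-w2) + λ₄ • w4 = μ₁ • (-w1) + μ₃ • w3 + μ₅ • w5`. -/
lemma identity2 (e : ℝ) :
    (Real.sqrt (1 - 2 * e ^ 2) * (1+e) * (Real.sqrt (1 - 2 * e ^ 2) + e)) • (-(w2 e))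
      + (e * (1 + Real.sqrt (1 - 2 * e ^ 2)) * (Real.sqrt (1 - 2 * e ^ 2) + e)) • w4 e
    = (2 * e * Real.sqrt (1 - 2 * e ^ 2) * (Real.sqrt (1 - 2 * e ^ 2) + e)) • (-w1)
      + (Real.sqrt (1 - 2 * e ^ 2) * (Real.sqrt (1 - 2 * e ^ 2)
          + Real.sqrt (1 - 2 * e ^ 2) * e + e - e^2)) • w3 e
      + (e * (Real.sqrt (1 - 2 * e ^ 2) + Real.sqrt (1 - 2 * e ^ 2) * e + e
          - Real.sqrt (1 - 2 * e ^ 2) ^ 2)) • w5 e := by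
  funext i
  fin_cases i <;> simp [w1, w2, w3, w4, w5] <;> ring

lemma P2_eq {e : ℝ} (he : 0 < e) (he1 : e < 1/10) :
    P2 e = convexHull ℝ {-w1, w3 e, w4 e, w5 e} ∪ convexHull ℝ {-w1, -(w2 e), w3 e, w5 e} := by
  set δ := Real.sqrt (1 - 2 * e ^ 2) with hδdef
  have hd := hde he he1
  have hd1' := hd1 he he1
  have hδpos : 0 < δ := lt_trans he hd
  have hL2 : (0:ℝ) < δ * (1+e) * (δ + e) := by positivity
  have hL4 : (0:ℝ) < e * (1 + δ) * (δ + e) := by positivity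
  have hμ1 : (0:ℝ) ≤ 2 * e * δ * (δ + e) := by positivity
  have hμ3 : (0:ℝ) ≤ δ * (δ + δ * e + e - e^2) := by nlinarith
  have hμ5 : (0:ℝ) ≤ e * (δ + δ * e + e - δ^2) := by nlinarith
  apply le_antisymm
  · intro x hx
    obtain ⟨A, B, C, D, F, hA, hB, hC, hD, hF, hsum, hrep⟩ := exists_rep5 hx
    have hI := identity2 e
    rw [← hδdef] at hI
    rcases le_or_gt (B * (e * (1 + δ) * (δ + e))) (D * (δ * (1+e) * (δ + e))) with hcase | hcase
    · left
      apply mem_hull4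
        (c₁ := A * (δ * (1+e) * (δ + e)) + B * (2 * e * δ * (δ + e)))
        (c₂ := C * (δ * (1+e) * (δ + e)) + B * (δ * (δ + δ * e + e - e^2)))
        (c₃ := D * (δ * (1+e) * (δ + e)) - B * (e * (1 + δ) * (δ + e)))
        (c₄ := F * (δ * (1+e) * (δ + e)) + B * (e * (δ + δ * e + e - δ^2)))
        (by nlinarith [mul_nonneg hA hL2.le, mul_nonneg hB hμ1])
        (by nlinarith [mul_nonneg hC hL2.le, mul_nonneg hB hμ3])
        (by nlinarith)
        (by nlinarith [mul_nonneg hF hL2.le, mul_nonneg hB hμ5])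
        (by nlinarith [mul_pos hL2 (show (0:ℝ) < A + B + C + D + F by linarith)])
      funext i
      have h1 := congrFun hrep i
      have h2 := congrFun hI i
      simp only [Pi.add_apply, Pi.smul_apply, Pi.neg_apply, smul_eq_mul] at h1 h2 ⊢
      linear_combination (δ * (1+e) * (δ + e)) * h1 - B * h2
        - ((δ * (1+e) * (δ + e)) * x i) * hsum
    · right
      apply mem_hull4
        (c₁ := A * (e * (1 + δ) * (δ + e)) + D * (2 * e * δ * (δ + e)))
        (c₂ := B * (e * (1 + δ) * (δ + e)) - D * (δ * (1+e) * (δ + e)))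
        (c₃ := C * (e * (1 + δ) * (δ + e)) + D * (δ * (δ + δ * e + e - e^2)))
        (c₄ := F * (e * (1 + δ) * (δ + e)) + D * (e * (δ + δ * e + e - δ^2)))
        (by nlinarith [mul_nonneg hA hL4.le, mul_nonneg hD hμ1])
        (by nlinarith)
        (by nlinarith [mul_nonneg hC hL4.le, mul_nonneg hD hμ3])
        (by nlinarith [mul_nonneg hF hL4.le, mul_nonneg hD hμ5])
        (by nlinarith [mul_pos hL4 (show (0:ℝ) < A + B + C + D + F by linarith)])
      funext i
      have h1 := congrFun hrep i
      have h2 := congrFun hI i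
      simp only [Pi.add_apply, Pi.smul_apply, Pi.neg_apply, smul_eq_mul] at h1 h2 ⊢
      linear_combination (e * (1 + δ) * (δ + e)) * h1 - D * h2
        - ((e * (1 + δ) * (δ + e)) * x i) * hsum
  · apply Set.union_subset <;>
      exact convexHull_mono (by intro y hy; simp only [Set.mem_insert_iff,
        Set.mem_singleton_iff] at hy ⊢; tauto)

lemma null_plane (α β γ c : ℝ) (hne : α ≠ 0 ∨ β ≠ 0 ∨ γ ≠ 0) :
    volume {x : Fin 3 → ℝ | α * x 0 + β * x 1 + γ * x 2 = c} = 0 := by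
  set g : (Fin 3 → ℝ) →ₗ[ℝ] ℝ :=
    α • (LinearMap.proj 0) + β • (LinearMap.proj 1) + γ • (LinearMap.proj 2) with hgdef
  have hg : ∀ x : Fin 3 → ℝ, g x = α * x 0 + β * x 1 + γ * x 2 := by
    intro x
    simp [hgdef, LinearMap.proj_apply]
  have hy : ∃ y : Fin 3 → ℝ, g y ≠ 0 := by
    rcases hne with h | h | h
    · exact ⟨Pi.single 0 1, by rw [hg]; simp [Pi.single_apply, h]⟩
    · exact ⟨Pi.single 1 1, by rw [hg]; simp [Pi.single_apply, h]⟩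
    · exact ⟨Pi.single 2 1, by rw [hg]; simp [Pi.single_apply, h]⟩
  obtain ⟨y, hy⟩ := hy
  set x₀ : Fin 3 → ℝ := (c / g y) • y with hx₀def
  have hx₀ : g x₀ = c := by
    rw [hx₀def, g.map_smul, smul_eq_mul, div_mul_cancel₀ _ hy]
  have hset : {x : Fin 3 → ℝ | α * x 0 + β * x 1 + γ * x 2 = c}
      = x₀ +ᵥ (LinearMap.ker g : Set (Fin 3 → ℝ)) := by
    ext z
    constructor
    · intro hz
      refine ⟨z - x₀, ?_, by simp⟩
      have : g z = c := by rw [hg]; exact hz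
      simp only [SetLike.mem_coe, LinearMap.mem_ker, map_sub, this, hx₀, sub_self]
    · rintro ⟨w, hw, rfl⟩
      simp only [SetLike.mem_coe, LinearMap.mem_ker] at hw
      show α * (x₀ +ᵥ w) 0 + β * (x₀ +ᵥ w) 1 + γ * (x₀ +ᵥ w) 2 = c
      have : g (x₀ + w) = c := by rw [map_add, hw, add_zero, hx₀]
      rw [hg] at this
      exact this
  rw [hset, measure_vadd]
  apply Measure.addHaar_submodule
  intro h
  exact hy (by rw [LinearMap.ker_eq_top.mp h]; rfl)

section vols
variable {e : ℝ} (he : 0 < e) (he1 : e < 1/10)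

lemma vol_T1 (he : 0 < e) (he1 : e < 1/10) : volume (convexHull ℝ {w1, w2 e, w4 e, w5 e})
    = ENNReal.ofReal (2 * Real.sqrt (1 - 2 * e ^ 2) * (1 - e)
        * (Real.sqrt (1 - 2 * e ^ 2) - e) / 6) := by
  have hd := hde he he1
  set δ := Real.sqrt (1 - 2 * e ^ 2) with hδ
  have hset : ({w1, w2 e, w4 e, w5 e} : Set (Fin 3 → ℝ))
      = {w1, w1 + (w2 e - w1), w1 + (w4 e - w1), w1 + (w5 e - w1)} := by simp
  rw [hset, volume_tetra]
  congr 1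
  have hdet : (Matrix.of ![w2 e - w1, w4 e - w1, w5 e - w1]).det
      = -(2 * δ * (1 - e) * (δ - e)) := by
    rw [Matrix.det_fin_three]
    simp [w1, w2, w4, w5, Matrix.vecHead, Matrix.vecTail]
    ring
  have hδpos : 0 < δ := lt_trans he hd
  have hnn : (0:ℝ) ≤ 2 * δ * (1 - e) * (δ - e) := by
    have h1 : (0:ℝ) < 1 - e := by linarith
    have h2 : (0:ℝ) < δ - e := by linarith
    nlinarith [mul_pos (mul_pos hδpos h1) h2]
  rw [hdet, abs_neg, abs_of_nonneg hnn]

lemma vol_T2 (he : 0 < e) (he1 : e < 1/10) : volume (convexHull ℝ {w1, w3 e, w4 e, w5 e})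
    = ENNReal.ofReal (2 * Real.sqrt (1 - 2 * e ^ 2) * (1 - e)
        * (Real.sqrt (1 - 2 * e ^ 2) + e) / 6) := by
  have hd := hde he he1
  set δ := Real.sqrt (1 - 2 * e ^ 2) with hδ
  have hset : ({w1, w3 e, w4 e, w5 e} : Set (Fin 3 → ℝ))
      = {w1, w1 + (w3 e - w1), w1 + (w4 e - w1), w1 + (w5 e - w1)} := by simp
  rw [hset, volume_tetra]
  congr 1
  have hdet : (Matrix.of ![w3 e - w1, w4 e - w1, w5 e - w1]).det
      = 2 * δ * (1 - e) * (δ + e) := by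
    rw [Matrix.det_fin_three]
    simp [w1, w3, w4, w5, Matrix.vecHead, Matrix.vecTail]
    ring
  have hδpos : 0 < δ := lt_trans he hd
  have hnn : (0:ℝ) ≤ 2 * δ * (1 - e) * (δ + e) := by
    have h1 : (0:ℝ) < 1 - e := by linarith
    have h2 : (0:ℝ) < δ + e := by linarith
    nlinarith [mul_pos (mul_pos hδpos h1) h2]
  rw [hdet, abs_of_nonneg hnn]

lemma vol_C (he : 0 < e) (he1 : e < 1/10) : volume (convexHull ℝ {-w1, w3 e, w4 e, w5 e})
    = ENNReal.ofReal (2 * Real.sqrt (1 - 2 * e ^ 2) * (1 + e)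
        * (Real.sqrt (1 - 2 * e ^ 2) + e) / 6) := by
  have hd := hde he he1
  set δ := Real.sqrt (1 - 2 * e ^ 2) with hδ
  have hset : ({-w1, w3 e, w4 e, w5 e} : Set (Fin 3 → ℝ))
      = {-w1, -w1 + (w3 e + w1), -w1 + (w4 e + w1), -w1 + (w5 e + w1)} := by
    have h3 : -w1 + (w3 e + w1) = w3 e := by abel
    have h4 : -w1 + (w4 e + w1) = w4 e := by abel
    have h5 : -w1 + (w5 e + w1) = w5 e := by abel
    rw [h3, h4, h5]
  rw [hset, volume_tetra]
  congr 1
  have hdet : (Matrix.of ![w3 e + w1, w4 e + w1, w5 e + w1]).det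
      = -(2 * δ * (1 + e) * (δ + e)) := by
    rw [Matrix.det_fin_three]
    simp [w1, w3, w4, w5, Matrix.vecHead, Matrix.vecTail]
    ring
  have hδpos : 0 < δ := lt_trans he hd
  have hnn : (0:ℝ) ≤ 2 * δ * (1 + e) * (δ + e) := by
    have h1 : (0:ℝ) < 1 + e := by linarith
    have h2 : (0:ℝ) < δ + e := by linarith
    nlinarith [mul_pos (mul_pos hδpos h1) h2]
  rw [hdet, abs_neg, abs_of_nonneg hnn]

lemma vol_D (he : 0 < e) (he1 : e < 1/10) : volume (convexHull ℝ {-w1, -(w2 e), w3 e, w5 e})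
    = ENNReal.ofReal (2 * e * (1 + Real.sqrt (1 - 2 * e ^ 2))
        * (Real.sqrt (1 - 2 * e ^ 2) + e) / 6) := by
  have hd := hde he he1
  set δ := Real.sqrt (1 - 2 * e ^ 2) with hδ
  have hset : ({-w1, -(w2 e), w3 e, w5 e} : Set (Fin 3 → ℝ))
      = {-w1, -w1 + (w1 - w2 e), -w1 + (w3 e + w1), -w1 + (w5 e + w1)} := by
    have h2 : -w1 + (w1 - w2 e) = -(w2 e) := by abel
    have h3 : -w1 + (w3 e + w1) = w3 e := by abel
    have h5 : -w1 + (w5 e + w1) = w5 e := by abel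
    rw [h2, h3, h5]
  rw [hset, volume_tetra]
  congr 1
  have hdet : (Matrix.of ![w1 - w2 e, w3 e + w1, w5 e + w1]).det
      = -(2 * e * (1 + δ) * (δ + e)) := by
    rw [Matrix.det_fin_three]
    simp [w1, w2, w3, w5, Matrix.vecHead, Matrix.vecTail]
    ring
  have hδpos : 0 < δ := lt_trans he hd
  have hnn : (0:ℝ) ≤ 2 * e * (1 + δ) * (δ + e) := by
    have h1 : (0:ℝ) < 1 + δ := by linarith
    have h2 : (0:ℝ) < δ + e := by linarith
    nlinarith [mul_pos (mul_pos he h1) h2]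
  rw [hdet, abs_neg, abs_of_nonneg hnn]

end vols

lemma vol_P1 {e : ℝ} (he : 0 < e) (he1 : e < 1/10) :
    volume (P1 e) = ENNReal.ofReal (4 * (1 - 2 * e ^ 2) * (1 - e) / 6) := by
  have hd := hde he he1
  set δ := Real.sqrt (1 - 2 * e ^ 2) with hδ
  have hδpos : 0 < δ := lt_trans he hd
  have hlin : IsLinearMap ℝ (fun x : Fin 3 → ℝ => (1 - e) * x 0 + e * x 2) := by
    constructor
    · intro x y; simp only [Pi.add_apply]; ring
    · intro c x; simp only [Pi.smul_apply, smul_eq_mul]; ring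
  have hT1sub : convexHull ℝ {w1, w2 e, w4 e, w5 e}
      ⊆ {x : Fin 3 → ℝ | e ≤ (1 - e) * x 0 + e * x 2} := by
    apply convexHull_min _ (convex_halfSpace_ge hlin e)
    rintro y hy
    simp only [Set.mem_insert_iff, Set.mem_singleton_iff] at hy
    rcases hy with rfl | rfl | rfl | rfl <;>
      simp only [Set.mem_setOf_eq, w1, w2, w4, w5, Matrix.cons_val_zero, Matrix.cons_val_two,
        Matrix.tail_cons, Matrix.head_cons, Matrix.cons_val_one] <;> nlinarith
  have hT2sub : convexHull ℝ {w1, w3 e, w4 e, w5 e}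
      ⊆ {x : Fin 3 → ℝ | (1 - e) * x 0 + e * x 2 ≤ e} := by
    apply convexHull_min _ (convex_halfSpace_le hlin e)
    rintro y hy
    simp only [Set.mem_insert_iff, Set.mem_singleton_iff] at hy
    rcases hy with rfl | rfl | rfl | rfl <;>
      simp only [Set.mem_setOf_eq, w1, w3, w4, w5, Matrix.cons_val_zero, Matrix.cons_val_two,
        Matrix.tail_cons, Matrix.head_cons, Matrix.cons_val_one] <;> nlinarith
  rw [P1_eq he he1]
  rw [measure_union₀ ((convex_convexHull ℝ _).nullMeasurableSet volume) ?hdisj]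
  case hdisj =>
    have hsub : convexHull ℝ {w1, w2 e, w4 e, w5 e} ∩ convexHull ℝ {w1, w3 e, w4 e, w5 e}
        ⊆ {x : Fin 3 → ℝ | (1-e) * x 0 + 0 * x 1 + e * x 2 = e} := by
      rintro x ⟨hx1, hx2⟩
      have h1 := hT1sub hx1
      have h2 := hT2sub hx2
      simp only [Set.mem_setOf_eq] at h1 h2 ⊢
      linarith
    exact measure_mono_null hsub (null_plane _ _ _ _ (Or.inl (by linarith)))
  rw [vol_T1 he he1, vol_T2 he he1, ← hδ]
  have hnn1 : (0:ℝ) ≤ 2 * δ * (1 - e) * (δ - e) / 6 := by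
    have h1 : (0:ℝ) < 1 - e := by linarith
    have h2 : (0:ℝ) < δ - e := by linarith
    nlinarith [mul_pos (mul_pos hδpos h1) h2]
  have hnn2 : (0:ℝ) ≤ 2 * δ * (1 - e) * (δ + e) / 6 := by
    have h1 : (0:ℝ) < 1 - e := by linarith
    have h2 : (0:ℝ) < δ + e := by linarith
    nlinarith [mul_pos (mul_pos hδpos h1) h2]
  rw [← ENNReal.ofReal_add hnn1 hnn2]
  congr 1
  have hd2' := hd2 he he1
  rw [← hδ] at hd2'
  linear_combination ((2 * (1 - e)) / 3) * hd2'

lemma vol_P2 {e : ℝ} (he : 0 < e) (he1 : e < 1/10) :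
    volume (P2 e) = ENNReal.ofReal (2 * (Real.sqrt (1 - 2 * e ^ 2) + e)
      * (Real.sqrt (1 - 2 * e ^ 2) + e + 2 * Real.sqrt (1 - 2 * e ^ 2) * e) / 6) := by
  have hd := hde he he1
  have hd1' := hd1 he he1
  set δ := Real.sqrt (1 - 2 * e ^ 2) with hδ
  have hδpos : 0 < δ := lt_trans he hd
  have hlin : IsLinearMap ℝ (fun x : Fin 3 → ℝ =>
      ((1+e)*(δ+e)) * x 0 + ((1+e)*(δ+e)) * x 1 + (δ^2 - e^2) * x 2) := by
    constructor
    · intro x y; simp only [Pi.add_apply]; ring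
    · intro c x; simp only [Pi.smul_apply, smul_eq_mul]; ring
  have hCsub : convexHull ℝ {-w1, w3 e, w4 e, w5 e}
      ⊆ {x : Fin 3 → ℝ | e^2 - δ^2 ≤ ((1+e)*(δ+e)) * x 0 + ((1+e)*(δ+e)) * x 1
          + (δ^2 - e^2) * x 2} := by
    apply convexHull_min _ (convex_halfSpace_ge hlin (e^2 - δ^2))
    rintro y hy
    simp only [Set.mem_insert_iff, Set.mem_singleton_iff] at hy
    rcases hy with rfl | rfl | rfl | rfl <;>
      simp only [Set.mem_setOf_eq, w1, w3, w4, w5, Pi.neg_apply, Matrix.cons_val_zero,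
        Matrix.cons_val_two, Matrix.tail_cons, Matrix.head_cons, Matrix.cons_val_one] <;>
      nlinarith [mul_pos (mul_pos (show (0:ℝ) < 1 + e by linarith)
        (show (0:ℝ) < δ + e by linarith)) (show (0:ℝ) < δ + e by linarith),
        mul_pos he (show (0:ℝ) < δ^2 - e^2 by nlinarith)]
  have hDsub : convexHull ℝ {-w1, -(w2 e), w3 e, w5 e}
      ⊆ {x : Fin 3 → ℝ | ((1+e)*(δ+e)) * x 0 + ((1+e)*(δ+e)) * x 1
          + (δ^2 - e^2) * x 2 ≤ e^2 - δ^2} := by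
    apply convexHull_min _ (convex_halfSpace_le hlin (e^2 - δ^2))
    rintro y hy
    simp only [Set.mem_insert_iff, Set.mem_singleton_iff] at hy
    rcases hy with rfl | rfl | rfl | rfl <;>
      simp only [Set.mem_setOf_eq, w1, w2, w3, w5, Pi.neg_apply, Matrix.cons_val_zero,
        Matrix.cons_val_two, Matrix.tail_cons, Matrix.head_cons, Matrix.cons_val_one] <;>
      nlinarith [mul_pos (mul_pos (show (0:ℝ) < 1 + e by linarith)
        (show (0:ℝ) < δ + e by linarith)) (show (0:ℝ) < δ + e by linarith),
        mul_pos he (show (0:ℝ) < δ^2 - e^2 by nlinarith)]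
  rw [P2_eq he he1]
  rw [measure_union₀ ((convex_convexHull ℝ _).nullMeasurableSet volume) ?hdisj]
  case hdisj =>
    have hsub : convexHull ℝ {-w1, w3 e, w4 e, w5 e} ∩ convexHull ℝ {-w1, -(w2 e), w3 e, w5 e}
        ⊆ {x : Fin 3 → ℝ | ((1+e)*(δ+e)) * x 0
          + ((1+e)*(δ+e)) * x 1 + (δ^2 - e^2) * x 2 = e^2 - δ^2} := by
      rintro x ⟨hx1, hx2⟩
      have h1 := hCsub hx1
      have h2 := hDsub hx2
      simp only [Set.mem_setOf_eq] at h1 h2 ⊢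
      linarith
    exact measure_mono_null hsub (null_plane _ _ _ _ (Or.inl (by nlinarith)))
  rw [vol_C he he1, vol_D he he1, ← hδ]
  have hnn1 : (0:ℝ) ≤ 2 * δ * (1 + e) * (δ + e) / 6 := by positivity
  rw [← ENNReal.ofReal_add hnn1 (by positivity)]
  congr 1
  ring

lemma not_mem_P1 {e : ℝ} (he : 0 < e) (he1 : e < 1/10) : (0 : Fin 3 → ℝ) ∉ P1 e := by
  intro h0
  have hlin : IsLinearMap ℝ (fun x : Fin 3 → ℝ => x 2) :=
    ⟨fun x y => rfl, fun c x => rfl⟩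
  have hsub : P1 e ⊆ {x : Fin 3 → ℝ | e ≤ x 2} := by
    apply convexHull_min _ (convex_halfSpace_ge hlin e)
    rintro y hy
    simp only [Set.mem_insert_iff, Set.mem_singleton_iff] at hy
    rcases hy with rfl | rfl | rfl | rfl | rfl <;>
      simp only [Set.mem_setOf_eq, w1, w2, w3, w4, w5, Matrix.cons_val_two,
        Matrix.tail_cons, Matrix.head_cons] <;> linarith
  have := hsub h0
  simp only [Set.mem_setOf_eq, Pi.zero_apply] at this
  linarith

lemma zero_mem_interior_P2 {e : ℝ} (he : 0 < e) (he1 : e < 1/10) :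
    (0 : Fin 3 → ℝ) ∈ interior (P2 e) := by
  have hd := hde he he1
  set δ := Real.sqrt (1 - 2 * e ^ 2) with hδ
  have hδpos : 0 < δ := lt_trans he hd
  -- the open "corner interior"
  set U : Set (Fin 3 → ℝ) :=
    {x | (0 < x 0 ∧ 0 < x 1 ∧ 0 < x 2) ∧ x 0 + x 1 + x 2 < 1} with hU
  have hUopen : IsOpen U := by
    apply IsOpen.inter
    · exact ((isOpen_lt continuous_const (continuous_apply 0)).inter
        ((isOpen_lt continuous_const (continuous_apply 1)).inter
          (isOpen_lt continuous_const (continuous_apply 2))))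
    · exact isOpen_lt (((continuous_apply 0).add (continuous_apply 1)).add (continuous_apply 2)) continuous_const
  have hUsub : U ⊆ corner := by
    rintro x ⟨⟨h0, h1, h2⟩, hs⟩
    refine ⟨fun i => ?_, le_of_lt hs⟩
    fin_cases i <;> [exact h0.le; exact h1.le; exact h2.le]
  -- the affine map
  set F := tmap (-w1) (w3 e + w1) (w4 e + w1) (w5 e + w1) with hF
  have himg : F '' corner = convexHull ℝ {-w1, w3 e, w4 e, w5 e} := by
    rw [hF, tmap_image_corner]
    have h3 : -w1 + (w3 e + w1) = w3 e := by abel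
    have h4 : -w1 + (w4 e + w1) = w4 e := by abel
    have h5 : -w1 + (w5 e + w1) = w5 e := by abel
    rw [h3, h4, h5]
  -- openness of F on open sets
  set M := (Matrix.of ![w3 e + w1, w4 e + w1, w5 e + w1])ᵀ with hM
  have hdet : M.det ≠ 0 := by
    rw [hM, Matrix.det_transpose, Matrix.det_fin_three]
    simp [w1, w3, w4, w5, Matrix.vecHead, Matrix.vecTail]
    intro habs
    nlinarith [habs, mul_pos (mul_pos hδpos (show (0:ℝ) < 1 + e by linarith))
      (show (0:ℝ) < δ + e by linarith)]
  haveI hinv : Invertible M := M.invertibleOfIsUnitDet (isUnit_iff_ne_zero.mpr hdet)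
  have hopenL : IsOpenMap (⇑(Matrix.toLin' M)) := by
    have : ⇑(Matrix.toLin' M) = ⇑((M.toLinearEquiv' hinv).toContinuousLinearEquiv.toHomeomorph) := by
      rfl
    rw [this]
    exact (M.toLinearEquiv' hinv).toContinuousLinearEquiv.toHomeomorph.isOpenMap
  have hopenF : IsOpenMap ⇑F := by
    have heq : ⇑F = (fun y => y + (-w1)) ∘ ⇑(Matrix.toLin' M) := by
      funext x
      simp only [Function.comp_apply, hF, tmap_apply, Matrix.toLin'_apply, hM]
    rw [heq]
    exact (Homeomorph.addRight (-w1)).isOpenMap.comp hopenL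
  -- the preimage point
  have hden1 : ((Real.sqrt (1 - 2 * e ^ 2) + e) * (1 + e)) ≠ 0 := by positivity
  set y₀ : Fin 3 → ℝ := ![e / ((δ + e) * (1 + e)), (δ - e) / (2 * δ * (1 + e)),
      (δ^2 + e^2) / (2 * δ * (δ + e) * (1 + e))] with hy₀
  have hy₀U : y₀ ∈ U := by
    simp only [hU, hy₀, Set.mem_setOf_eq, Matrix.cons_val_zero, Matrix.cons_val_one,
      Matrix.head_cons, Matrix.cons_val_two, Matrix.tail_cons]
    have hde' : (0:ℝ) < δ - e := by linarith
    refine ⟨⟨by positivity, by positivity, by positivity⟩, ?_⟩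
    have hsum : e / ((δ + e) * (1 + e)) + (δ - e) / (2 * δ * (1 + e))
        + (δ^2 + e^2) / (2 * δ * (δ + e) * (1 + e)) = 1 / (1 + e) := by
      field_simp
      ring
    rw [hsum, div_lt_one (by linarith)]
    linarith
  have hFy₀ : F y₀ = 0 := by
    funext i
    rw [hF, tmap_apply]
    fin_cases i <;>
    · simp only [Fin.reduceFinMk, Matrix.mulVec, dotProduct, Fin.sum_univ_three, Matrix.transpose_apply,
        Matrix.of_apply, Pi.add_apply, Pi.neg_apply, Pi.zero_apply,
        w1, w3, w4, w5, hy₀, Matrix.cons_val_zero, Matrix.cons_val_one, Matrix.head_cons,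
        Matrix.cons_val_two, Matrix.tail_cons]
      simp -failIfUnchanged only [← hδ]
      field_simp
      ring
  -- conclude
  have h0mem : (0 : Fin 3 → ℝ) ∈ F '' U := ⟨y₀, hy₀U, hFy₀⟩
  have hsub : F '' U ⊆ P2 e := by
    intro z hz
    have : z ∈ F '' corner := Set.image_mono hUsub hz
    rw [himg] at this
    exact convexHull_mono (by intro y hy; simp only [Set.mem_insert_iff,
      Set.mem_singleton_iff] at hy ⊢; tauto) this
  exact interior_maximal hsub (hopenF U hUopen) h0mem

lemma ofReal_twothirds : ENNReal.ofReal (2/3 : ℝ) = (2 : ℝ≥0∞) / 3 := by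
  rw [ENNReal.ofReal_div_of_pos (by norm_num)]
  norm_num

lemma ofReal_onethird : ENNReal.ofReal (1/3 : ℝ) = (1 : ℝ≥0∞) / 3 := by
  rw [ENNReal.ofReal_div_of_pos (by norm_num)]
  norm_num

/-- In ℝ³ there is an antipodal point set of 10 points on the unit sphere with
an antipodal polytope `P1 e` not containing the origin and an antipodal
polytope `P2 e` containing the origin in its interior, such that
`Vol (P1 e) > Vol (P2 e)`; moreover as e → 0⁺, `Vol (P1 e) → 2/3` and
`Vol (P2 e) → 1/3`. -/
theorem stmt_12 :
    (∃ ε₀ : ℝ, 0 < ε₀ ∧ ∀ e : ℝ, 0 < e → e < ε₀ →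
      (0 : Fin 3 → ℝ) ∉ P1 e ∧
      (0 : Fin 3 → ℝ) ∈ interior (P2 e) ∧
      volume (P2 e) < volume (P1 e)) ∧
    Tendsto (fun e => volume (P1 e)) (nhdsWithin 0 (Set.Ioi 0))
      (nhds ((2 : ℝ≥0∞) / 3)) ∧
    Tendsto (fun e => volume (P2 e)) (nhdsWithin 0 (Set.Ioi 0))
      (nhds ((1 : ℝ≥0∞) / 3)) := by
  refine ⟨⟨1/10, by norm_num, fun e he he1 => ⟨not_mem_P1 he he1,
    zero_mem_interior_P2 he he1, ?_⟩⟩, ?_, ?_⟩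
  · rw [vol_P1 he he1, vol_P2 he he1]
    have hd := hde he he1
    have hd1' := hd1 he he1
    have hd2' := hd2 he he1
    set δ := Real.sqrt (1 - 2 * e ^ 2) with hδ
    apply (ENNReal.ofReal_lt_ofReal_iff (by nlinarith)).2
    nlinarith [sq_nonneg e, sq_nonneg (1 - δ), mul_pos he he]
  · apply Tendsto.congr' (f₁ := fun e => ENNReal.ofReal (4 * (1 - 2 * e ^ 2) * (1 - e) / 6))
    · filter_upwards [Ioo_mem_nhdsGT_of_mem
        (by norm_num : (0:ℝ) ∈ Set.Ico (0:ℝ) (1/10))] with e he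
      exact (vol_P1 he.1 he.2).symm
    · rw [← ofReal_twothirds]
      apply (ENNReal.continuous_ofReal.tendsto _).comp
      apply Tendsto.mono_left _ nhdsWithin_le_nhds
      exact (Continuous.tendsto' (by continuity) 0 (2/3) (by norm_num))
  · apply Tendsto.congr' (f₁ := fun e => ENNReal.ofReal (2 * (Real.sqrt (1 - 2 * e ^ 2) + e)
      * (Real.sqrt (1 - 2 * e ^ 2) + e + 2 * Real.sqrt (1 - 2 * e ^ 2) * e) / 6))
    · filter_upwards [Ioo_mem_nhdsGT_of_mem
        (by norm_num : (0:ℝ) ∈ Set.Ico (0:ℝ) (1/10))] with e he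
      exact (vol_P2 he.1 he.2).symm
    · rw [← ofReal_onethird]
      apply (ENNReal.continuous_ofReal.tendsto _).comp
      apply Tendsto.mono_left _ nhdsWithin_le_nhds
      have hc : Continuous (fun e : ℝ => 2 * (Real.sqrt (1 - 2 * e ^ 2) + e)
          * (Real.sqrt (1 - 2 * e ^ 2) + e + 2 * Real.sqrt (1 - 2 * e ^ 2) * e) / 6) := by
        have hsq : Continuous (fun e : ℝ => Real.sqrt (1 - 2 * e ^ 2)) :=
          Real.continuous_sqrt.comp (by continuity)
        continuity
      exact hc.tendsto' 0 (1/3) (by norm_num)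

end
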